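/- For every 0 < α ≤ 1, c_η^N(α) ≤ c_η^2(α). -/

import Mathlib

open MeasureTheory ProbabilityTheory

noncomputable section

def midN (N : ℕ) (p : ℝ × (Fin (N-1) → ℝ)) : ℝ :=
  (max p.1 (⨆ i, p.2 i) + min p.1 (⨅ i, p.2 i)) / 2

def accN (N : ℕ) (η Δ : ℝ) : Set (ℝ × (Fin (N-1) → ℝ)) :=
  {p | max p.1 (⨆ i, p.2 i) - min p.1 (⨅ i, p.2 i) ≤ η * Δ}

def PA_N (N : ℕ) (η Δ : ℝ) (μ : Measure ℝ) (ν : Measure (Fin (N-1) → ℝ)) : ℝ :=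
  ((μ.prod ν) (accN N η Δ)).toReal

def MSE_N (N : ℕ) (η Δ : ℝ) (μ : Measure ℝ) (ν : Measure (Fin (N-1) → ℝ)) : ℝ :=
  ∫ p, (midN N p) ^ 2 ∂((μ.prod ν)[|accN N η Δ])

def mid2 (p : ℝ × ℝ) : ℝ := (max p.1 p.2 + min p.1 p.2) / 2

def acc2 (η Δ : ℝ) : Set (ℝ × ℝ) := {p | max p.1 p.2 - min p.1 p.2 ≤ η * Δ}

def PA_2 (η Δ : ℝ) (μ κ : Measure ℝ) : ℝ := ((μ.prod κ) (acc2 η Δ)).toReal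

def MSE_2 (η Δ : ℝ) (μ κ : Measure ℝ) : ℝ :=
  ∫ p, (mid2 p) ^ 2 ∂((μ.prod κ)[|acc2 η Δ])

def cN (N : ℕ) (η Δ : ℝ) (μ : Measure ℝ) (α : ℝ) : ℝ :=
  sSup {r | ∃ ν : Measure (Fin (N-1) → ℝ), IsProbabilityMeasure ν ∧
    α ≤ PA_N N η Δ μ ν ∧ r = MSE_N N η Δ μ ν}

def c2 (η Δ : ℝ) (μ : Measure ℝ) (α : ℝ) : ℝ :=
  sSup {r | ∃ κ : Measure ℝ, IsProbabilityMeasure κ ∧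
    α ≤ PA_2 η Δ μ κ ∧ r = MSE_2 η Δ μ κ}

def IsBestResponseN (N : ℕ) (η Δ : ℝ) (μ : Measure ℝ) (QAD : ℝ → ℝ → ℝ)
    (ν : Measure (Fin (N-1) → ℝ)) : Prop :=
  IsProbabilityMeasure ν ∧ 0 < PA_N N η Δ μ ν ∧
    ∀ ν' : Measure (Fin (N-1) → ℝ), IsProbabilityMeasure ν' → 0 < PA_N N η Δ μ ν' →
      QAD (MSE_N N η Δ μ ν') (PA_N N η Δ μ ν') ≤ QAD (MSE_N N η Δ μ ν) (PA_N N η Δ μ ν)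

def IsBestResponse2 (η Δ : ℝ) (μ : Measure ℝ) (QAD : ℝ → ℝ → ℝ) (κ : Measure ℝ) : Prop :=
  IsProbabilityMeasure κ ∧ 0 < PA_2 η Δ μ κ ∧
    ∀ κ' : Measure ℝ, IsProbabilityMeasure κ' → 0 < PA_2 η Δ μ κ' →
      QAD (MSE_2 η Δ μ κ') (PA_2 η Δ μ κ') ≤ QAD (MSE_2 η Δ μ κ) (PA_2 η Δ μ κ)

namespace Stmt6Aux

lemma maxmin_add (a b : ℝ) : max a b + min a b = a + b := by
  rcases le_total a b with h|h
  · rw [max_eq_right h, min_eq_left h]; ring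
  · rw [max_eq_left h, min_eq_right h]

lemma measurable_csup {k : ℕ} (hk : 0 < k) :
    Measurable (fun x : Fin k → ℝ => ⨆ i, x i) := by
  haveI : Nonempty (Fin k) := ⟨⟨0, hk⟩⟩
  have h : (fun x : Fin k → ℝ => ⨆ i, x i)
      = Finset.univ.sup' Finset.univ_nonempty (fun i (x : Fin k → ℝ) => x i) := by
    funext x
    rw [Finset.sup'_apply, Finset.sup'_univ_eq_ciSup]
  rw [h]
  exact Finset.measurable_sup' _ (fun i _ => measurable_pi_apply i)

lemma measurable_cinf {k : ℕ} (hk : 0 < k) :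
    Measurable (fun x : Fin k → ℝ => ⨅ i, x i) := by
  haveI : Nonempty (Fin k) := ⟨⟨0, hk⟩⟩
  have h : (fun x : Fin k → ℝ => ⨅ i, x i)
      = Finset.univ.inf' Finset.univ_nonempty (fun i (x : Fin k → ℝ) => x i) := by
    funext x
    rw [Finset.inf'_apply, Finset.inf'_univ_eq_ciInf]
  rw [h]
  exact Finset.inf'_induction _ _ (fun _f hf _g hg => Measurable.inf' hf hg)
    (fun i _ => measurable_pi_apply i)

/-- acceptance equivalence -/
lemma keyA {η Δ n Mi mI : ℝ} (hΔ : 0 < Δ) (hη : 2 ≤ η) (hmi : mI ≤ Mi)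
    (hn1 : -Δ ≤ n) (hn2 : n ≤ Δ) :
    (max n Mi - min n mI ≤ η*Δ ↔
      max n (if Mi - mI ≤ η*Δ then (if 0 ≤ Mi + mI then Mi else mI) else (η+2)*Δ)
        - min n (if Mi - mI ≤ η*Δ then (if 0 ≤ Mi + mI then Mi else mI) else (η+2)*Δ)
        ≤ η*Δ) := by
  have h2Δ : 2*Δ ≤ η*Δ := by nlinarith
  split_ifs with hd hs
  · rcases le_total n Mi with h1|h1 <;> rcases le_total n mI with h2|h2
    · rw [max_eq_right h1, min_eq_left h2, min_eq_left h1]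
    · rw [max_eq_right h1, min_eq_right h2, min_eq_left h1]
      constructor <;> intro h <;> linarith
    · rw [max_eq_left h1, min_eq_left h2, min_eq_right h1]
      constructor <;> intro h <;> linarith
    · rw [max_eq_left h1, min_eq_right h2, min_eq_right h1]
      constructor <;> intro h <;> linarith
  · push_neg at hs
    rcases le_total n Mi with h1|h1 <;> rcases le_total n mI with h2|h2
    · rw [max_eq_right h1, min_eq_left h2, max_eq_right h2]
      constructor <;> intro h <;> linarith
    · rw [max_eq_right h1, min_eq_right h2, max_eq_left h2]
      constructor <;> intro h <;> linarith
    · rw [max_eq_left h1, min_eq_left h2, max_eq_right h2]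
      constructor <;> intro h <;> linarith
    · rw [max_eq_left h1, min_eq_right h2, max_eq_left h2]
  · push_neg at hd
    have hn3 : n ≤ (η+2)*Δ := by linarith
    rw [max_eq_right hn3, min_eq_left hn3]
    constructor <;> intro h <;> exfalso
    · have := le_max_right n Mi
      have := min_le_right n mI
      linarith
    · linarith

/-- midpoint domination -/
lemma keyB {η Δ n Mi mI : ℝ} (hΔ : 0 < Δ) (hη : 2 ≤ η) (hmi : mI ≤ Mi)
    (hn1 : -Δ ≤ n) (hn2 : n ≤ Δ)
    (hacc : max n Mi - min n mI ≤ η*Δ) :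
    (max n Mi + min n mI)^2 ≤
      (n + (if Mi - mI ≤ η*Δ then (if 0 ≤ Mi + mI then Mi else mI) else (η+2)*Δ))^2 := by
  have h2Δ : 2*Δ ≤ η*Δ := by nlinarith
  split_ifs with hd hs
  · rcases le_total n Mi with h1|h1 <;> rcases le_total n mI with h2|h2
    · rw [max_eq_right h1, min_eq_left h2]; nlinarith
    · rw [max_eq_right h1, min_eq_right h2]
      nlinarith [mul_nonneg (show (0:ℝ) ≤ n + Mi - (Mi+mI) by linarith)
        (show (0:ℝ) ≤ n + Mi + (Mi+mI) by linarith)]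
    · have e : Mi = n := le_antisymm h1 (h2.trans hmi)
      rw [max_eq_left h1, min_eq_left h2, e]
    · rw [max_eq_left h1, min_eq_right h2]
      nlinarith [mul_nonneg (show (0:ℝ) ≤ Mi - mI by linarith)
        (show (0:ℝ) ≤ 2*n + Mi + mI by linarith)]
  · push_neg at hs
    rcases le_total n Mi with h1|h1 <;> rcases le_total n mI with h2|h2
    · rw [max_eq_right h1, min_eq_left h2]
      nlinarith [mul_nonneg (show (0:ℝ) ≤ Mi - mI by linarith)
        (show (0:ℝ) ≤ -(2*n + Mi + mI) by linarith)]
    · rw [max_eq_right h1, min_eq_right h2]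
      nlinarith [mul_nonneg (show (0:ℝ) ≤ Mi - n by linarith)
        (show (0:ℝ) ≤ -(n + Mi + 2*mI) by linarith)]
    · have e : mI = n := le_antisymm (hmi.trans h1) h2
      rw [max_eq_left h1, min_eq_left h2, e]
    · rw [max_eq_left h1, min_eq_right h2]
  · exfalso
    push_neg at hd
    have := le_max_right n Mi
    have := min_le_right n mI
    linarith

/-- generic bound for midpoints under acceptance -/
lemma sq_bound {η Δ n u v : ℝ} (hΔ : 0 < Δ) (hη : 2 ≤ η)
    (h : u - v ≤ η*Δ) (h1 : n ≤ u) (h2 : v ≤ n) (h3 : -Δ ≤ n) (h4 : n ≤ Δ) :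
    ((u+v)/2)^2 ≤ ((η+2)*Δ)^2 := by
  have hK : (0:ℝ) ≤ η*Δ := by nlinarith
  nlinarith [mul_nonneg (show (0:ℝ) ≤ (η+2)*Δ - (u+v)/2 by linarith)
    (show (0:ℝ) ≤ (η+2)*Δ + (u+v)/2 by linarith)]

lemma ae_fst_mem {Δ : ℝ} {μ : Measure ℝ} [IsProbabilityMeasure μ]
    (hμ : μ (Set.Icc (-Δ) Δ) = 1) {β : Type*} [MeasurableSpace β]
    (ρ : Measure β) [IsProbabilityMeasure ρ] :
    ∀ᵐ p ∂(μ.prod ρ), p.1 ∈ Set.Icc (-Δ) Δ := by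
  have h0 : μ (Set.Icc (-Δ) Δ)ᶜ = 0 := by
    rw [measure_compl measurableSet_Icc (measure_ne_top _ _), hμ, measure_univ, tsub_self]
  rw [ae_iff]
  have h1 : {p : ℝ × β | ¬ p.1 ∈ Set.Icc (-Δ) Δ} = (Set.Icc (-Δ) Δ)ᶜ ×ˢ Set.univ := by
    ext p; simp
  rw [h1, Measure.prod_prod, h0, zero_mul]

end Stmt6Aux

open Stmt6Aux in
theorem stmt6 {N : ℕ} (hN : 2 ≤ N) {η Δ : ℝ} (hΔ : 0 < Δ) (hη : 2 ≤ η)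
    (μ : Measure ℝ) [IsProbabilityMeasure μ] (hμ : μ (Set.Icc (-Δ) Δ) = 1) :
    ∀ α : ℝ, 0 < α → α ≤ 1 → cN N η Δ μ α ≤ c2 η Δ μ α := by
  intro α hα hα1
  have hk : 0 < N - 1 := by omega
  haveI : Nonempty (Fin (N-1)) := ⟨⟨0, hk⟩⟩
  have hMsup := measurable_csup hk
  have hMinf := measurable_cinf hk
  -- measurability of sets and functions
  have hmacc2 : MeasurableSet (acc2 η Δ) :=
    measurableSet_le ((measurable_fst.max measurable_snd).sub
      (measurable_fst.min measurable_snd)) measurable_const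
  have hmaccN : MeasurableSet (accN N η Δ) :=
    measurableSet_le ((measurable_fst.max (hMsup.comp measurable_snd)).sub
      (measurable_fst.min (hMinf.comp measurable_snd))) measurable_const
  have hmid2 : Measurable mid2 :=
    ((measurable_fst.max measurable_snd).add (measurable_fst.min measurable_snd)).div_const 2
  have hmidN : Measurable (midN N) :=
    ((measurable_fst.max (hMsup.comp measurable_snd)).add
      (measurable_fst.min (hMinf.comp measurable_snd))).div_const 2
  set K : ℝ := ((η+2)*Δ)^2 with hK_def
  have hKnn : 0 ≤ K := sq_nonneg _
  -- uniform bound for MSE_2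
  have hbound : ∀ (κ : Measure ℝ), IsProbabilityMeasure κ → MSE_2 η Δ μ κ ≤ K := by
    intro κ hκ
    haveI := hκ
    rcases eq_or_ne ((μ.prod κ) (acc2 η Δ)) 0 with h0 | h0
    · have : (μ.prod κ)[|acc2 η Δ] = 0 := by
        rw [show (μ.prod κ)[|acc2 η Δ] = ((μ.prod κ) (acc2 η Δ))⁻¹ • (μ.prod κ).restrict (acc2 η Δ) from rfl,
          Measure.restrict_eq_zero.mpr h0, smul_zero]
      rw [MSE_2, this, integral_zero_measure]
      exact hKnn
    · haveI hcp : IsProbabilityMeasure ((μ.prod κ)[|acc2 η Δ]) :=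
        cond_isProbabilityMeasure h0
      have haeB : ∀ᵐ p ∂((μ.prod κ)[|acc2 η Δ]), (mid2 p)^2 ≤ K := by
        have h1 : ∀ᵐ p ∂((μ.prod κ).restrict (acc2 η Δ)), (mid2 p)^2 ≤ K := by
          filter_upwards [ae_restrict_mem hmacc2, ae_restrict_of_ae (ae_fst_mem hμ κ)]
            with p hpA hpB
          obtain ⟨hb1, hb2⟩ := hpB
          exact sq_bound hΔ hη hpA (le_max_left _ _) (min_le_left _ _) hb1 hb2
        exact Measure.ae_smul_measure h1 _
      have hint : Integrable (fun p => (mid2 p)^2) ((μ.prod κ)[|acc2 η Δ]) := by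
        refine (integrable_const K).mono' ((hmid2.pow_const 2).aestronglyMeasurable) ?_
        filter_upwards [haeB] with p hp
        rw [Real.norm_eq_abs, abs_of_nonneg (sq_nonneg _)]
        exact hp
      calc MSE_2 η Δ μ κ ≤ ∫ _, K ∂((μ.prod κ)[|acc2 η Δ]) :=
            integral_mono_ae hint (integrable_const K) haeB
        _ = K := by simp
  -- bddAbove of the 2-node set
  have hbdd : BddAbove {r | ∃ κ : Measure ℝ, IsProbabilityMeasure κ ∧
      α ≤ PA_2 η Δ μ κ ∧ r = MSE_2 η Δ μ κ} := by
    refine ⟨K, ?_⟩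
    rintro r ⟨κ, hκ, _, rfl⟩
    exact hbound κ hκ
  -- dirac 0 member, so c2 ≥ 0
  have hδmem : (MSE_2 η Δ μ (Measure.dirac 0)) ∈ {r | ∃ κ : Measure ℝ, IsProbabilityMeasure κ ∧
      α ≤ PA_2 η Δ μ κ ∧ r = MSE_2 η Δ μ κ} := by
    refine ⟨Measure.dirac 0, by infer_instance, ?_, rfl⟩
    have hsub : Set.Icc (-Δ) Δ ×ˢ ({0} : Set ℝ) ⊆ acc2 η Δ := by
      rintro ⟨n, t⟩ ⟨hn, ht⟩
      simp only [Set.mem_singleton_iff] at ht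
      subst ht
      obtain ⟨hn1, hn2⟩ := hn
      rcases le_total n 0 with h|h
      · rw [acc2, Set.mem_setOf_eq, max_eq_right h, min_eq_left h]; nlinarith
      · rw [acc2, Set.mem_setOf_eq, max_eq_left h, min_eq_right h]; nlinarith
    have h1 : (μ.prod (Measure.dirac 0)) (acc2 η Δ) = 1 := by
      refine le_antisymm prob_le_one ?_
      calc (1:ENNReal) = μ (Set.Icc (-Δ) Δ) * (Measure.dirac 0) ({0} : Set ℝ) := by
            rw [hμ, Measure.dirac_apply_of_mem (Set.mem_singleton 0), one_mul]
        _ = (μ.prod (Measure.dirac 0)) (Set.Icc (-Δ) Δ ×ˢ ({0} : Set ℝ)) :=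
            (Measure.prod_prod _ _).symm
        _ ≤ (μ.prod (Measure.dirac 0)) (acc2 η Δ) := measure_mono hsub
    rw [PA_2, h1]
    simpa using hα1
  have hc2nn : 0 ≤ c2 η Δ μ α := by
    have h1 : (0:ℝ) ≤ MSE_2 η Δ μ (Measure.dirac 0) :=
      integral_nonneg (fun p => sq_nonneg _)
    exact h1.trans (le_csSup hbdd hδmem)
  -- main: each N-node value is ≤ c2
  rw [cN]
  refine Real.sSup_le ?_ hc2nn
  rintro r ⟨ν, hν, hνα, rfl⟩
  haveI := hν
  -- the simulating 2-node strategy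
  set f : (Fin (N-1) → ℝ) → ℝ := fun x =>
    if (⨆ i, x i) - (⨅ i, x i) ≤ η*Δ then
      (if 0 ≤ (⨆ i, x i) + (⨅ i, x i) then ⨆ i, x i else ⨅ i, x i)
    else (η+2)*Δ with hf_def
  have hf : Measurable f := by
    refine Measurable.ite (measurableSet_le (hMsup.sub hMinf) measurable_const) ?_ measurable_const
    exact Measurable.ite (measurableSet_le measurable_const (hMsup.add hMinf)) hMsup hMinf
  set κ : Measure ℝ := ν.map f with hκ_def
  haveI hκp : IsProbabilityMeasure κ := Measure.isProbabilityMeasure_map hf.aemeasurable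
  set T : ℝ × (Fin (N-1) → ℝ) → ℝ × ℝ := Prod.map id f with hT_def
  have hT : Measurable T := measurable_id.prodMap hf
  set m : Measure (ℝ × (Fin (N-1) → ℝ)) := μ.prod ν with hm_def
  have hprod : μ.prod κ = m.map T := by
    rw [hκ_def, hm_def, hT_def]
    calc μ.prod (ν.map f) = (μ.map id).prod (ν.map f) := by rw [Measure.map_id]
      _ = (μ.prod ν).map (Prod.map id f) := Measure.map_prod_map μ ν measurable_id hf
  -- a.e. equality of acceptance sets
  have hsupinf : ∀ x : Fin (N-1) → ℝ, (⨅ i, x i) ≤ (⨆ i, x i) := by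
    intro x
    exact le_trans (ciInf_le (Finite.bddBelow_range _) (Classical.arbitrary _))
      (le_ciSup (Finite.bddAbove_range _) (Classical.arbitrary _))
  have hTmem : ∀ p : ℝ × (Fin (N-1) → ℝ), p.1 ∈ Set.Icc (-Δ) Δ →
      (p ∈ accN N η Δ ↔ T p ∈ acc2 η Δ) := by
    intro p hp
    obtain ⟨hp1, hp2⟩ := hp
    have h := keyA (n := p.1) (Mi := ⨆ i, p.2 i) (mI := ⨅ i, p.2 i) hΔ hη (hsupinf p.2) hp1 hp2
    simpa [accN, acc2, T, f, Prod.map] using h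
  have hAE : (T ⁻¹' acc2 η Δ) =ᵐ[m] accN N η Δ := by
    rw [Filter.eventuallyEq_set]
    filter_upwards [ae_fst_mem hμ ν] with p hp
    rw [Set.mem_preimage]
    exact (hTmem p hp).symm
  have hPA : PA_2 η Δ μ κ = PA_N N η Δ μ ν := by
    rw [PA_2, PA_N, hprod, Measure.map_apply hT hmacc2, measure_congr hAE]
  have hPA' : (μ.prod κ) (acc2 η Δ) = m (accN N η Δ) := by
    rw [hprod, Measure.map_apply hT hmacc2, measure_congr hAE]
  -- MSE comparison
  have hMSE : MSE_N N η Δ μ ν ≤ MSE_2 η Δ μ κ := by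
    have hrw2 : MSE_2 η Δ μ κ
        = ((m (accN N η Δ))⁻¹).toReal • ∫ p, (mid2 (T p))^2 ∂(m.restrict (accN N η Δ)) := by
      rw [MSE_2, show (μ.prod κ)[|acc2 η Δ]
          = ((μ.prod κ) (acc2 η Δ))⁻¹ • (μ.prod κ).restrict (acc2 η Δ) from rfl,
        integral_smul_measure, hPA']
      congr 1
      rw [hprod, Measure.restrict_map hT hmacc2, Measure.restrict_congr_set hAE,
        integral_map hT.aemeasurable ((hmid2.pow_const 2).aestronglyMeasurable)]
    have hrw1 : MSE_N N η Δ μ ν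
        = ((m (accN N η Δ))⁻¹).toReal • ∫ p, (midN N p)^2 ∂(m.restrict (accN N η Δ)) := by
      rw [MSE_N, show (μ.prod ν)[|accN N η Δ]
          = ((μ.prod ν) (accN N η Δ))⁻¹ • (μ.prod ν).restrict (accN N η Δ) from rfl,
        integral_smul_measure]
    rw [hrw1, hrw2]
    have hint1 : Integrable (fun p => (midN N p)^2) (m.restrict (accN N η Δ)) := by
      refine (integrable_const K).mono' ((hmidN.pow_const 2).aestronglyMeasurable) ?_
      filter_upwards [ae_restrict_mem hmaccN, ae_restrict_of_ae (ae_fst_mem hμ ν)]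
        with p hpA hpB
      obtain ⟨hb1, hb2⟩ := hpB
      rw [Real.norm_eq_abs, abs_of_nonneg (sq_nonneg _)]
      exact sq_bound hΔ hη hpA (le_max_left _ _) (min_le_left _ _) hb1 hb2
    have hint2 : Integrable (fun p => (mid2 (T p))^2) (m.restrict (accN N η Δ)) := by
      refine (integrable_const K).mono'
        (((hmid2.comp hT).pow_const 2).aestronglyMeasurable) ?_
      filter_upwards [ae_restrict_mem hmaccN, ae_restrict_of_ae (ae_fst_mem hμ ν)]
        with p hpA hpB
      obtain ⟨hb1, hb2⟩ := hpB
      rw [Real.norm_eq_abs, abs_of_nonneg (sq_nonneg _)]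
      have hacc2 : T p ∈ acc2 η Δ := (hTmem p ⟨hb1, hb2⟩).mp hpA
      have : (T p).1 = p.1 := rfl
      refine sq_bound hΔ hη (by exact hacc2) (le_max_left _ _) (min_le_left _ _) ?_ ?_ <;>
        rw [this] <;> assumption
    have hmono : ∫ p, (midN N p)^2 ∂(m.restrict (accN N η Δ))
        ≤ ∫ p, (mid2 (T p))^2 ∂(m.restrict (accN N η Δ)) := by
      refine integral_mono_ae hint1 hint2 ?_
      filter_upwards [ae_restrict_mem hmaccN, ae_restrict_of_ae (ae_fst_mem hμ ν)]
        with p hpA hpB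
      obtain ⟨hb1, hb2⟩ := hpB
      have h := keyB (n := p.1) (Mi := ⨆ i, p.2 i) (mI := ⨅ i, p.2 i) hΔ hη
        (hsupinf p.2) hb1 hb2 hpA
      have hm2 : mid2 (T p) = (p.1 + f p.2) / 2 := by
        rw [mid2, maxmin_add]; rfl
      rw [midN, hm2]
      have hfp : f p.2 = (if (⨆ i, p.2 i) - (⨅ i, p.2 i) ≤ η*Δ then
          (if 0 ≤ (⨆ i, p.2 i) + (⨅ i, p.2 i) then ⨆ i, p.2 i else ⨅ i, p.2 i)
        else (η+2)*Δ) := rfl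
      rw [hfp]
      nlinarith [h]
    exact smul_le_smul_of_nonneg_left hmono (ENNReal.toReal_nonneg)
  -- conclude
  refine hMSE.trans (le_csSup hbdd ?_)
  exact ⟨κ, hκp, by rw [hPA]; exact hνα, rfl⟩

end
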